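/- arXiv:2105.10625 — 2 statements merged into one kernel-verified Lean document; each statement's English description precedes it below -/
import Mathlib

section
/- Let (Ω, P) be a probability space, let T ≥ 1 and d_max ≥ 1 be integers, and for each t ∈ {1, …, T} let A_t : Ω → {0,1} and D_t : Ω → ℕ be random variables such that: (i) each D_t takes values in {1, …, d_max}; (ii) the D_t are identically distributed with common mean d = E[D_t] (so d ≥ 1); (iii) for each t, the random variables A_t and D_t are independent; and (iv) almost surely, for every t ∈ {1, …, T}, A_ت + Σ_{t' < t} A_{t'} · 1{D_{t'} > t − t'} ≤ 1 (an arm played at time t' blocks any play during the next D_{t'} − 1 rounds). Then (1/T) · Σ_{t=1}^{T} E[A_t] ≤ 1/d + d_max/T. -/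
open MeasureTheory ProbabilityTheory

private lemma sum_le_one_aux {s : Finset ℕ} (f : ℕ → ℝ)
    (h0 : ∀ t ∈ s, 0 ≤ f t) (h1 : ∀ t ∈ s, f t ≤ 1)
    (huniq : ∀ t1 ∈ s, ∀ t2 ∈ s, f t1 ≠ 0 → f t2 ≠ 0 → t1 = t2) :
    ∑ t ∈ s, f t ≤ 1 := by
  classical
  rw [← Finset.sum_filter_ne_zero]
  have hcard : (s.filter fun t => f t ≠ 0).card ≤ 1 := by
    refine Finset.card_le_one.2 fun a ha b hb => ?_
    simp only [Finset.mem_filter] at ha hb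
    exact huniq a ha.1 b hb.1 ha.2 hb.2
  calc ∑ t ∈ s.filter fun t => f t ≠ 0, f t
      ≤ ∑ _t ∈ s.filter fun t => f t ≠ 0, (1:ℝ) :=
        Finset.sum_le_sum fun t ht => h1 t (Finset.mem_filter.1 ht).1
    _ = ((s.filter fun t => f t ≠ 0).card : ℝ) := by simp
    _ ≤ 1 := by exact_mod_cast hcard

/-- **Lemma (stochastic pulling rate).** If a single arm with i.i.d. delays `D t ∈ {1,…,d_max}`
of mean `d` is played according to `A t ∈ {0,1}`, where `A t` and `D t` are independent
(the algorithm is not a priori aware of delay realizations) and the blocking constraint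
`A t + Σ_{t'<t} A t' · 1{D t' > t - t'} ≤ 1` holds almost surely, then the expected pulling
rate satisfies `(1/T) Σ_t E[A t] ≤ 1/d + d_max/T`. -/
theorem stmt1 {Ω : Type*} [MeasurableSpace Ω] (P : Measure Ω) [IsProbabilityMeasure P]
    (T dmax : ℕ) (hT : 1 ≤ T) (hdmax : 1 ≤ dmax)
    (A : ℕ → Ω → ℝ) (D : ℕ → Ω → ℕ)
    (hAmeas : ∀ t, Measurable (A t)) (hDmeas : ∀ t, Measurable (D t))
    (hA01 : ∀ t ω, A t ω = 0 ∨ A t ω = 1)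
    (hDrange : ∀ t ω, 1 ≤ D t ω ∧ D t ω ≤ dmax)
    (hident : ∀ t t', t < T → t' < T → IdentDistrib (D t) (D t') P P)
    (d : ℝ) (hd : ∀ t, t < T → ∫ ω, (D t ω : ℝ) ∂P = d)
    (hindep : ∀ t, t < T → IndepFun (A t) (D t) P)
    (hblock : ∀ᵐ ω ∂P, ∀ t, t < T →
      A t ω + ∑ t' ∈ Finset.range t, A t' ω * (if t - t' < D t' ω then 1 else 0) ≤ 1) :
    (1 / T : ℝ) * ∑ t ∈ Finset.range T, ∫ ω, A t ω ∂P ≤ 1 / d + dmax / T := by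
  classical
  have hT0 : (0:ℝ) < T := by exact_mod_cast hT
  have hdmax0 : (1:ℝ) ≤ (dmax:ℝ) := by exact_mod_cast hdmax
  have hDm : ∀ t, Measurable fun ω => (D t ω : ℝ) :=
    fun t => measurable_from_top.comp (hDmeas t)
  have hDint : ∀ t, Integrable (fun ω => (D t ω : ℝ)) P := fun t =>
    (integrable_const (dmax:ℝ)).mono' (hDm t).aestronglyMeasurable
      (ae_of_all _ fun ω => by
        rw [Real.norm_eq_abs, abs_of_nonneg (by positivity : (0:ℝ) ≤ (D t ω:ℝ))]
        exact_mod_cast (hDrange t ω).2)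
  have hAnn : ∀ t ω, 0 ≤ A t ω := fun t ω => by rcases hA01 t ω with h|h <;> simp [h]
  have hAle : ∀ t ω, A t ω ≤ 1 := fun t ω => by rcases hA01 t ω with h|h <;> simp [h]
  have hAint : ∀ t, Integrable (A t) P := fun t =>
    (integrable_const (1:ℝ)).mono' (hAmeas t).aestronglyMeasurable
      (ae_of_all _ fun ω => by
        rw [Real.norm_eq_abs, abs_of_nonneg (hAnn t ω)]; exact hAle t ω)
  have hADint : ∀ t, Integrable (fun ω => A t ω * (D t ω : ℝ)) P := fun t =>
    (integrable_const (dmax:ℝ)).mono' ((hAmeas t).mul (hDm t)).aestronglyMeasurable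
      (ae_of_all _ fun ω => by
        rw [Real.norm_eq_abs, abs_of_nonneg (mul_nonneg (hAnn t ω) (by positivity))]
        calc A t ω * (D t ω:ℝ) ≤ 1 * (D t ω:ℝ) :=
              mul_le_mul_of_nonneg_right (hAle t ω) (by positivity)
          _ = (D t ω:ℝ) := one_mul _
          _ ≤ (dmax:ℝ) := by exact_mod_cast (hDrange t ω).2)
  have hd1 : (1:ℝ) ≤ d := by
    rw [← hd 0 (by omega)]
    calc (1:ℝ) = ∫ _, (1:ℝ) ∂P := by simp
      _ ≤ ∫ ω, (D 0 ω:ℝ) ∂P := integral_mono (integrable_const 1) (hDint 0)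
          (fun ω => by show (1:ℝ) ≤ (D 0 ω:ℝ); exact_mod_cast (hDrange 0 ω).1)
  have hd0 : (0:ℝ) < d := lt_of_lt_of_le one_pos hd1
  -- pointwise key inequality
  have key : ∀ᵐ ω ∂P, ∑ t ∈ Finset.range T, A t ω * (D t ω:ℝ) ≤ (T:ℝ) + dmax := by
    filter_upwards [hblock] with ω hb
    have hrw : ∀ t ∈ Finset.range T, A t ω * (D t ω:ℝ)
        = ∑ s ∈ Finset.range (T+dmax),
            A t ω * (if t ≤ s ∧ s - t < D t ω then (1:ℝ) else 0) := by
      intro t ht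
      rw [Finset.mem_range] at ht
      rw [← Finset.mul_sum]
      congr 1
      rw [Finset.sum_boole]
      have hfil : (Finset.range (T+dmax)).filter (fun s => t ≤ s ∧ s - t < D t ω)
          = Finset.Ico t (t + D t ω) := by
        ext s
        simp only [Finset.mem_filter, Finset.mem_range, Finset.mem_Ico]
        have h2 := (hDrange t ω).2
        omega
      rw [hfil, Nat.card_Ico]
      simp
    rw [Finset.sum_congr rfl hrw, Finset.sum_comm]
    calc ∑ s ∈ Finset.range (T+dmax), ∑ t ∈ Finset.range T,
          A t ω * (if t ≤ s ∧ s - t < D t ω then (1:ℝ) else 0)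
        ≤ ∑ _s ∈ Finset.range (T+dmax), (1:ℝ) := by
          apply Finset.sum_le_sum
          intro s _
          apply sum_le_one_aux
          · intro t _
            exact mul_nonneg (hAnn t ω) (by split <;> norm_num)
          · intro t _
            calc A t ω * (if t ≤ s ∧ s - t < D t ω then (1:ℝ) else 0)
                ≤ 1 * 1 := mul_le_mul (hAle t ω) (by split <;> norm_num)
                    (by split <;> norm_num) zero_le_one
              _ = 1 := one_mul 1
          · intro t1 ht1 t2 ht2 hne1 hne2
            rw [Finset.mem_range] at ht1 ht2
            have hprop : ∀ t, t < T →
                A t ω * (if t ≤ s ∧ s - t < D t ω then (1:ℝ) else 0) ≠ 0 →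
                A t ω = 1 ∧ t ≤ s ∧ s - t < D t ω := by
              intro t htT hne
              by_cases hc : t ≤ s ∧ s - t < D t ω
              · refine ⟨?_, hc⟩
                rcases hA01 t ω with h|h
                · exact absurd (by simp [h]) hne
                · exact h
              · exact absurd (by simp [hc]) hne
            have hp1 := hprop t1 ht1 hne1
            have hp2 := hprop t2 ht2 hne2
            have contra : ∀ u v, u < v → v < T →
                (A u ω = 1 ∧ u ≤ s ∧ s - u < D u ω) →
                (A v ω = 1 ∧ v ≤ s ∧ s - v < D v ω) → False := by
              intro u v huv hvT hu hv
              have hc := hb v hvT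
              have hterm : (1:ℝ) ≤ A u ω * (if v - u < D u ω then (1:ℝ) else 0) := by
                have hcond : v - u < D u ω := by
                  have := hu.2.2
                  have := hu.2.1
                  have := hv.2.1
                  omega
                rw [if_pos hcond, hu.1, one_mul]
              have hsum : (1:ℝ) ≤ ∑ t' ∈ Finset.range v,
                  A t' ω * (if v - t' < D t' ω then (1:ℝ) else 0) := by
                refine le_trans hterm ?_
                apply Finset.single_le_sum (f := fun t' =>
                  A t' ω * (if v - t' < D t' ω then (1:ℝ) else 0))
                · intro i _
                  exact mul_nonneg (hAnn i ω) (by split <;> norm_num)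
                · exact Finset.mem_range.2 huv
              rw [hv.1] at hc
              linarith
            rcases lt_trichotomy t1 t2 with h|h|h
            · exact absurd (contra t1 t2 h ht2 hp1 hp2) (by simp)
            · exact h
            · exact absurd (contra t2 t1 h ht1 hp2 hp1) (by simp)
      _ = (T:ℝ) + dmax := by
          rw [Finset.sum_const, Finset.card_range, nsmul_eq_mul, mul_one]
          push_cast; ring
  -- take expectations
  have hintsum : ∫ ω, (∑ t ∈ Finset.range T, A t ω * (D t ω:ℝ)) ∂P ≤ (T:ℝ) + dmax := by
    calc ∫ ω, (∑ t ∈ Finset.range T, A t ω * (D t ω:ℝ)) ∂P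
        ≤ ∫ _, ((T:ℝ) + dmax) ∂P :=
          integral_mono_ae (integrable_finset_sum _ fun t _ => hADint t)
            (integrable_const _) key
      _ = (T:ℝ) + dmax := by simp
  rw [integral_finset_sum _ (fun t _ => hADint t)] at hintsum
  have hmul : ∀ t ∈ Finset.range T, ∫ ω, A t ω * (D t ω:ℝ) ∂P = d * ∫ ω, A t ω ∂P := by
    intro t ht
    rw [Finset.mem_range] at ht
    have hi : IndepFun (A t) (fun ω => (D t ω:ℝ)) P :=
      (hindep t ht).comp measurable_id measurable_from_top
    have heq : (fun ω => A t ω * (D t ω:ℝ)) = A t * (fun ω => (D t ω:ℝ)) := rfl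
    rw [heq, hi.integral_mul_eq_mul_integral (hAint t).aestronglyMeasurable (hDint t).aestronglyMeasurable, hd t ht, mul_comm]
  rw [Finset.sum_congr rfl hmul, ← Finset.mul_sum] at hintsum
  set S := ∑ t ∈ Finset.range T, ∫ ω, A t ω ∂P with hS
  have hS0 : 0 ≤ S :=
    Finset.sum_nonneg fun t _ => integral_nonneg (fun ω => hAnn t ω)
  rw [div_add_div _ _ (ne_of_gt hd0) (ne_of_gt hT0), one_div_mul_eq_div,
    div_le_div_iff₀ hT0 (mul_pos hd0 hT0)]
  nlinarith [mul_le_mul_of_nonneg_right hintsum hT0.le,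
    mul_nonneg (mul_nonneg (sub_nonneg.2 hd1) (by linarith : (0:ℝ) ≤ (dmax:ℝ))) hT0.le]
end

section
/- Let (Ω, P) be a probability space and k ≥ 1 an integer. For each i ∈ {1, …, k}, let (X_{i,j})_{j ≥ 1} be an i.i.d. sequence of random variables taking values in [0,1] with mean μ_i (sequences corresponding to different i need not be independent of each other). For s ≥ 1 let μ̂_{i,s} = (1/s) Σ_{j=1}^{s} X_{i,j} denote the empirical mean of the first s samples of arm i. Then for every integer t ≥ 2, P( ∃ i ∈ {1, …, k}, ∃ s ∈ {1, …, t−1} : |μ̂_{i,s} − μ_i| ≥ √(3 ln(t) / (2s)) ) ≤ 2k / t². -/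
open MeasureTheory ProbabilityTheory

open Real Finset in

lemma hoeffding_log_bound {p : ℝ} (hp0 : 0 ≤ p) (hp1 : p ≤ 1) (u : ℝ) :
    Real.log (1 - p + p * Real.exp u) - p * u ≤ u ^ 2 / 8 := by
  set g : ℝ → ℝ := fun x => 1 - p + p * Real.exp x with hgdef
  have hg : ∀ x, 0 < g x := by
    intro x
    rcases eq_or_lt_of_le hp0 with h | h
    · simp [hgdef, ← h]
    · have : 0 < p * Real.exp x := mul_pos h (exp_pos x)
      have : (0:ℝ) ≤ 1 - p := by linarith
      simp only [hgdef]
      nlinarith [mul_pos h (exp_pos x)]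
  set F : ℝ → ℝ := fun x => x ^ 2 / 8 - (Real.log (g x) - p * x) with hF
  set F' : ℝ → ℝ := fun x => x / 4 - (p * Real.exp x / g x - p) with hF'
  have hgd : ∀ x, HasDerivAt g (p * Real.exp x) x := by
    intro x
    exact ((Real.hasDerivAt_exp x).const_mul p).const_add (1 - p)
  have hFd : ∀ x, HasDerivAt F (F' x) x := by
    intro x
    have h1 : HasDerivAt (fun x : ℝ => x ^ 2 / 8) (x / 4) x := by
      have := (hasDerivAt_pow 2 x).div_const 8
      exact this.congr_deriv (by norm_num; ring)
    have h2 : HasDerivAt (fun x => Real.log (g x) - p * x)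
        (p * Real.exp x / g x - p) x := by
      exact (((hgd x).log (hg x).ne').sub ((hasDerivAt_id x).const_mul p)).congr_deriv (by ring)
    exact h1.sub h2
  have hF'd : ∀ x, HasDerivAt F'
      (1 / 4 - (p * Real.exp x * g x - p * Real.exp x * (p * Real.exp x)) / (g x) ^ 2) x := by
    intro x
    have h1 : HasDerivAt (fun x : ℝ => x / 4) (1 / 4) x := by
      simpa using (hasDerivAt_id x).div_const 4
    have h2 : HasDerivAt (fun x => p * Real.exp x / g x - p)
        ((p * Real.exp x * g x - p * Real.exp x * (p * Real.exp x)) / (g x) ^ 2) x :=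
      ((((Real.hasDerivAt_exp x).const_mul p).div (hgd x) (hg x).ne')).sub_const p
    exact h1.sub h2
  have hD : ∀ x, 0 ≤ 1 / 4 -
      (p * Real.exp x * g x - p * Real.exp x * (p * Real.exp x)) / (g x) ^ 2 := by
    intro x
    have hgx := hg x
    rw [sub_nonneg, div_le_iff₀ (by positivity)]
    have ha : 0 ≤ p * Real.exp x := mul_nonneg hp0 (exp_pos x).le
    have hb : (0:ℝ) ≤ 1 - p := by linarith
    have hgeq : g x = (1 - p) + p * Real.exp x := rfl
    nlinarith [sq_nonneg (p * Real.exp x - (1 - p))]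
  have hF'mono : Monotone F' := by
    refine monotone_of_deriv_nonneg (fun x => (hF'd x).differentiableAt) fun x => ?_
    rw [(hF'd x).deriv]; exact hD x
  have hF'0 : F' 0 = 0 := by
    simp [hF', hgdef]
  have hFmono : MonotoneOn F (Set.Ici 0) := by
    refine monotoneOn_of_deriv_nonneg (convex_Ici 0)
      (fun x _ => (hFd x).continuousAt.continuousWithinAt)
      (fun x _ => (hFd x).differentiableAt.differentiableWithinAt) fun x hx => ?_
    rw [(hFd x).deriv]
    rw [interior_Ici] at hx
    have := hF'mono (le_of_lt hx)
    rw [hF'0] at this; exact this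
  have hFanti : AntitoneOn F (Set.Iic 0) := by
    refine antitoneOn_of_deriv_nonpos (convex_Iic 0)
      (fun x _ => (hFd x).continuousAt.continuousWithinAt)
      (fun x _ => (hFd x).differentiableAt.differentiableWithinAt) fun x hx => ?_
    rw [(hFd x).deriv]
    rw [interior_Iic] at hx
    have := hF'mono (le_of_lt hx)
    rw [hF'0] at this; exact this
  have hF0 : F 0 = 0 := by simp [hF, hgdef]
  have : 0 ≤ F u := by
    rcases le_total 0 u with h | h
    · have := hFmono (Set.self_mem_Ici) h h
      rwa [hF0] at this
    · have := hFanti h (Set.self_mem_Iic) h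
      rwa [hF0] at this
  have : Real.log (g u) - p * u ≤ u ^ 2 / 8 := by
    simp only [hF] at this; linarith
  exact this

section helpers
open Real Finset
variable {Ω : Type*} [MeasurableSpace Ω] (P : Measure Ω) [IsProbabilityMeasure P]

lemma exp_mul_integrable {Y : Ω → ℝ} (hY : Measurable Y)
    (hr : ∀ ω, Y ω ∈ Set.Icc (0:ℝ) 1) (l : ℝ) :
    Integrable (fun ω => Real.exp (l * Y ω)) P := by
  refine Integrable.mono' (integrable_const (Real.exp |l|))
    (hY.const_mul l).exp.aestronglyMeasurable (ae_of_all _ fun ω => ?_)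
  rw [Real.norm_eq_abs, abs_of_nonneg (exp_pos _).le]
  apply Real.exp_le_exp.2
  calc l * Y ω ≤ |l * Y ω| := le_abs_self _
    _ = |l| * |Y ω| := abs_mul _ _
    _ ≤ |l| * 1 := by
        refine mul_le_mul_of_nonneg_left ?_ (abs_nonneg l)
        rw [abs_of_nonneg (hr ω).1]; exact (hr ω).2
    _ = |l| := mul_one _

lemma mgf_le_of_mem_Icc {Y : Ω → ℝ} (hY : Measurable Y)
    (hr : ∀ ω, Y ω ∈ Set.Icc (0:ℝ) 1) {m : ℝ} (hm : ∫ ω, Y ω ∂P = m) (l : ℝ) :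
    mgf Y P l ≤ Real.exp (l ^ 2 / 8 + l * m) := by
  have hYint : Integrable Y P := by
    refine Integrable.mono' (integrable_const 1) hY.aestronglyMeasurable
      (ae_of_all _ fun ω => ?_)
    rw [Real.norm_eq_abs, abs_of_nonneg (hr ω).1]; exact (hr ω).2
  have hm0 : 0 ≤ m := hm ▸ integral_nonneg fun ω => (hr ω).1
  have hm1 : m ≤ 1 := by
    rw [← hm]
    have h2 : ∫ ω, Y ω ∂P ≤ ∫ _, (1:ℝ) ∂P :=
      integral_mono hYint (integrable_const 1) fun ω => (hr ω).2
    simpa using h2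
  have hpt : ∀ ω, Real.exp (l * Y ω) ≤ 1 - Y ω + Y ω * Real.exp l := by
    intro ω
    have h := convexOn_exp.2 (Set.mem_univ (0:ℝ)) (Set.mem_univ l)
      (by linarith [(hr ω).2] : (0:ℝ) ≤ 1 - Y ω) (hr ω).1 (by ring)
    simpa [smul_eq_mul, mul_comm] using h
  have hint2 : Integrable (fun ω => 1 - Y ω + Y ω * Real.exp l) P := by
    exact ((integrable_const 1).sub hYint).add (hYint.mul_const _)
  have i1 : Integrable (fun ω => 1 - Y ω) P := by
    exact (integrable_const (1:ℝ)).sub hYint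
  have i2 : Integrable (fun ω => Y ω * Real.exp l) P := hYint.mul_const _
  have h1 : mgf Y P l ≤ 1 - m + m * Real.exp l := by
    have hI := integral_mono (exp_mul_integrable P hY hr l) hint2 hpt
    calc mgf Y P l = ∫ ω, Real.exp (l * Y ω) ∂P := rfl
      _ ≤ ∫ ω, (1 - Y ω + Y ω * Real.exp l) ∂P := hI
      _ = 1 - m + m * Real.exp l := by
          rw [integral_add i1 i2, integral_sub (integrable_const 1) hYint,
            integral_mul_const, hm]
          simp
  have hpos : 0 < 1 - m + m * Real.exp l := by
    rcases le_total 1 (Real.exp l) with h | h <;> nlinarith [exp_pos l]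
  calc mgf Y P l ≤ 1 - m + m * Real.exp l := h1
    _ = Real.exp (Real.log (1 - m + m * Real.exp l)) := (Real.exp_log hpos).symm
    _ ≤ Real.exp (l ^ 2 / 8 + l * m) := by
        apply Real.exp_le_exp.2
        have := hoeffding_log_bound hm0 hm1 l
        linarith [this]

lemma per_pair (Y : ℕ → Ω → ℝ) (m : ℝ)
    (hmeas : ∀ j, Measurable (Y j)) (hrange : ∀ j ω, Y j ω ∈ Set.Icc (0:ℝ) 1)
    (hindep : iIndepFun Y P)
    (hmean : ∀ j, ∫ ω, Y j ω ∂P = m)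
    (s : ℕ) (hs : 1 ≤ s) (ε : ℝ) (hε : 0 ≤ ε) :
    P {ω | ε ≤ |(1 / s : ℝ) * ∑ j ∈ Finset.range s, Y j ω - m|}
      ≤ ENNReal.ofReal (2 * Real.exp (-(2 * s * ε ^ 2))) := by
  set S : Ω → ℝ := fun ω => ∑ j ∈ Finset.range s, Y j ω with hS
  have hSsum : S = ∑ j ∈ Finset.range s, Y j := by
    ext ω; simp [hS, Finset.sum_apply]
  have hSmeas : Measurable S := Finset.measurable_sum _ fun j _ => hmeas j
  have hsR : (0:ℝ) < s := by exact_mod_cast hs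
  -- integrability of exp (l * S)
  have hSint : ∀ l : ℝ, Integrable (fun ω => Real.exp (l * S ω)) P := by
    intro l
    rw [hSsum]
    exact hindep.integrable_exp_mul_sum hmeas
      (fun j _ => exp_mul_integrable P (hmeas j) (hrange j) l)
  -- mgf bound for the sum
  have hmgf : ∀ l : ℝ, mgf S P l ≤ Real.exp (s * (l ^ 2 / 8 + l * m)) := by
    intro l
    rw [hSsum, hindep.mgf_sum hmeas]
    calc ∏ j ∈ Finset.range s, mgf (Y j) P l
        ≤ ∏ _j ∈ Finset.range s, Real.exp (l ^ 2 / 8 + l * m) :=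
          Finset.prod_le_prod (fun j _ => mgf_nonneg)
            (fun j _ => mgf_le_of_mem_Icc P (hmeas j) (hrange j) (hmean j) l)
      _ = Real.exp (l ^ 2 / 8 + l * m) ^ s := by
          rw [Finset.prod_const, Finset.card_range]
      _ = Real.exp (s * (l ^ 2 / 8 + l * m)) := by
          rw [← Real.exp_nat_mul]
  -- upper tail
  have hup : (P {ω | (s:ℝ) * m + s * ε ≤ S ω}).toReal ≤ Real.exp (-(2 * s * ε ^ 2)) := by
    have h := measure_ge_le_exp_mul_mgf (μ := P) (X := S) ((s:ℝ) * m + s * ε)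
      (by positivity : (0:ℝ) ≤ 4 * ε) (hSint (4 * ε))
    refine h.trans ?_
    calc Real.exp (-(4*ε) * ((s:ℝ) * m + s * ε)) * mgf S P (4*ε)
        ≤ Real.exp (-(4*ε) * ((s:ℝ) * m + s * ε)) * Real.exp (s * ((4*ε) ^ 2 / 8 + (4*ε) * m)) := by
          exact mul_le_mul_of_nonneg_left (hmgf (4*ε)) (exp_pos _).le
      _ = Real.exp (-(2 * s * ε ^ 2)) := by
          rw [← Real.exp_add]; congr 1; ring
  -- lower tail
  have hlo : (P {ω | S ω ≤ (s:ℝ) * m - s * ε}).toReal ≤ Real.exp (-(2 * s * ε ^ 2)) := by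
    have h := measure_le_le_exp_mul_mgf (μ := P) (X := S) ((s:ℝ) * m - s * ε)
      (by nlinarith : -(4 * ε) ≤ 0) (hSint (-(4 * ε)))
    refine h.trans ?_
    calc Real.exp (-(-(4*ε)) * ((s:ℝ) * m - s * ε)) * mgf S P (-(4*ε))
        ≤ Real.exp (-(-(4*ε)) * ((s:ℝ) * m - s * ε)) *
            Real.exp (s * ((-(4*ε)) ^ 2 / 8 + (-(4*ε)) * m)) := by
          exact mul_le_mul_of_nonneg_left (hmgf (-(4*ε))) (exp_pos _).le
      _ = Real.exp (-(2 * s * ε ^ 2)) := by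
          rw [← Real.exp_add]; congr 1; ring
  -- event inclusion
  have hsub : {ω | ε ≤ |(1 / s : ℝ) * ∑ j ∈ Finset.range s, Y j ω - m|}
      ⊆ {ω | (s:ℝ) * m + s * ε ≤ S ω} ∪ {ω | S ω ≤ (s:ℝ) * m - s * ε} := by
    intro ω hω
    simp only [Set.mem_setOf_eq] at hω
    have hs0 : (s:ℝ) ≠ 0 := hsR.ne'
    rcases le_abs.mp hω with h | h
    · left
      have h2 : (s:ℝ) * ε ≤ s * ((1 / s : ℝ) * S ω - m) :=
        mul_le_mul_of_nonneg_left h hsR.le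
      have h3 : (s:ℝ) * ((1 / s : ℝ) * S ω - m) = S ω - s * m := by
        field_simp
      simp only [Set.mem_setOf_eq]; linarith
    · right
      have h2 : (s:ℝ) * ε ≤ s * (-((1 / s : ℝ) * S ω - m)) :=
        mul_le_mul_of_nonneg_left h hsR.le
      have h3 : (s:ℝ) * (-((1 / s : ℝ) * S ω - m)) = s * m - S ω := by
        field_simp; ring
      simp only [Set.mem_setOf_eq]; linarith
  calc P {ω | ε ≤ |(1 / s : ℝ) * ∑ j ∈ Finset.range s, Y j ω - m|}
      ≤ P ({ω | (s:ℝ) * m + s * ε ≤ S ω} ∪ {ω | S ω ≤ (s:ℝ) * m - s * ε}) :=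
        measure_mono hsub
    _ ≤ P {ω | (s:ℝ) * m + s * ε ≤ S ω} + P {ω | S ω ≤ (s:ℝ) * m - s * ε} :=
        measure_union_le _ _
    _ ≤ ENNReal.ofReal (Real.exp (-(2 * s * ε ^ 2)))
        + ENNReal.ofReal (Real.exp (-(2 * s * ε ^ 2))) := by
        gcongr
        · rw [← ENNReal.ofReal_toReal (measure_ne_top P _)]
          exact ENNReal.ofReal_le_ofReal hup
        · rw [← ENNReal.ofReal_toReal (measure_ne_top P _)]
          exact ENNReal.ofReal_le_ofReal hlo
    _ = ENNReal.ofReal (2 * Real.exp (-(2 * s * ε ^ 2))) := by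
        rw [← ENNReal.ofReal_add (exp_pos _).le (exp_pos _).le]
        congr 1; ring
end helpers

/-- **Lemma (nice run).** For `k` arms with i.i.d. samples `X i j ∈ [0,1]` of mean `μ i`,
the probability that some empirical mean (over any number `s ∈ {1,…,t−1}` of samples)
deviates from `μ i` by at least `√(3 ln t / (2 s))` is at most `2k/t²`. -/
theorem stmt4 {Ω : Type*} [MeasurableSpace Ω] (P : Measure Ω) [IsProbabilityMeasure P]
    (k : ℕ) (hk : 1 ≤ k)
    (X : Fin k → ℕ → Ω → ℝ) (μ : Fin k → ℝ)
    (hmeas : ∀ i j, Measurable (X i j))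
    (hrange : ∀ i j ω, X i j ω ∈ Set.Icc (0 : ℝ) 1)
    (hindep : ∀ i, iIndepFun (X i) P)
    (hident : ∀ i j j', IdentDistrib (X i j) (X i j') P P)
    (hmean : ∀ i j, ∫ ω, X i j ω ∂P = μ i)
    (t : ℕ) (ht : 2 ≤ t) :
    P {ω | ∃ i : Fin k, ∃ s : ℕ, 1 ≤ s ∧ s ≤ t - 1 ∧
        Real.sqrt (3 * Real.log t / (2 * s)) ≤
          |(1 / s : ℝ) * ∑ j ∈ Finset.range s, X i j ω - μ i|}
      ≤ ENNReal.ofReal (2 * k / t ^ 2) := by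
  have htR : (2:ℝ) ≤ (t:ℝ) := by exact_mod_cast ht
  have htpos : (0:ℝ) < t := by linarith
  have hlogt : 0 ≤ Real.log t := Real.log_nonneg (by linarith)
  set E : Fin k → ℕ → Set Ω := fun i s =>
    {ω | Real.sqrt (3 * Real.log t / (2 * s)) ≤
      |(1 / s : ℝ) * ∑ j ∈ Finset.range s, X i j ω - μ i|} with hE
  -- per-pair bound
  have hpp : ∀ i : Fin k, ∀ s ∈ Finset.Icc 1 (t - 1),
      P (E i s) ≤ ENNReal.ofReal (2 / (t:ℝ) ^ 3) := by
    intro i s hsmem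
    obtain ⟨hs1, hs2⟩ := Finset.mem_Icc.mp hsmem
    have hsR : (0:ℝ) < s := by exact_mod_cast hs1
    have harg : 0 ≤ 3 * Real.log t / (2 * s) := by positivity
    have hεsq : Real.sqrt (3 * Real.log t / (2 * s)) ^ 2 = 3 * Real.log t / (2 * s) :=
      Real.sq_sqrt harg
    have h := per_pair P (X i) (μ i) (hmeas i) (hrange i) (hindep i) (hmean i)
      s hs1 (Real.sqrt (3 * Real.log t / (2 * s))) (Real.sqrt_nonneg _)
    refine h.trans (ENNReal.ofReal_le_ofReal ?_)
    have hexp : -(2 * (s:ℝ) * Real.sqrt (3 * Real.log t / (2 * s)) ^ 2)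
        = -(3 * Real.log t) := by
      rw [hεsq]; field_simp
    rw [hexp]
    have : Real.exp (-(3 * Real.log t)) = ((t:ℝ) ^ 3)⁻¹ := by
      rw [Real.exp_neg]
      congr 1
      rw [show (3:ℝ) * Real.log t = Real.log t + Real.log t + Real.log t by ring,
        Real.exp_add, Real.exp_add, Real.exp_log htpos]
      ring
    rw [this]
    rw [div_eq_mul_inv]
  -- union bound
  have hsub : {ω | ∃ i : Fin k, ∃ s : ℕ, 1 ≤ s ∧ s ≤ t - 1 ∧
      Real.sqrt (3 * Real.log t / (2 * s)) ≤
        |(1 / s : ℝ) * ∑ j ∈ Finset.range s, X i j ω - μ i|}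
      ⊆ ⋃ i : Fin k, ⋃ s ∈ Finset.Icc 1 (t - 1), E i s := by
    intro ω hω
    obtain ⟨i, s, hs1, hs2, hω⟩ := hω
    exact Set.mem_iUnion.mpr ⟨i, Set.mem_iUnion₂.mpr ⟨s, Finset.mem_Icc.mpr ⟨hs1, hs2⟩, hω⟩⟩
  calc P _ ≤ P (⋃ i : Fin k, ⋃ s ∈ Finset.Icc 1 (t - 1), E i s) := measure_mono hsub
    _ ≤ ∑' i : Fin k, P (⋃ s ∈ Finset.Icc 1 (t - 1), E i s) := measure_iUnion_le _
    _ = ∑ i : Fin k, P (⋃ s ∈ Finset.Icc 1 (t - 1), E i s) := tsum_fintype _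
    _ ≤ ∑ i : Fin k, ∑ s ∈ Finset.Icc 1 (t - 1), P (E i s) := by
        gcongr with i
        exact measure_biUnion_finset_le _ _
    _ ≤ ∑ i : Fin k, ∑ s ∈ Finset.Icc 1 (t - 1), ENNReal.ofReal (2 / (t:ℝ) ^ 3) := by
        gcongr with i _ s hs
        exact hpp i s hs
    _ = (k * (t - 1)) • ENNReal.ofReal (2 / (t:ℝ) ^ 3) := by
        simp [Finset.sum_const, Nat.card_Icc, mul_smul]
    _ ≤ ENNReal.ofReal (2 * k / t ^ 2) := by
        rw [nsmul_eq_mul, ← ENNReal.ofReal_natCast (k * (t - 1)),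
          ← ENNReal.ofReal_mul (by positivity)]
        apply ENNReal.ofReal_le_ofReal
        have ht1 : ((t - 1 : ℕ) : ℝ) = (t:ℝ) - 1 := by
          rw [Nat.cast_sub (by omega)]; simp
        rw [Nat.cast_mul, ht1]
        have hkR : (1:ℝ) ≤ k := by exact_mod_cast hk
        have hT3 : (0:ℝ) < (t:ℝ)^3 := by positivity
        calc (k:ℝ) * ((t:ℝ) - 1) * (2 / (t:ℝ)^3)
            = (2 * k * ((t:ℝ) - 1)) / (t:ℝ)^3 := by ring
          _ ≤ (2 * k * (t:ℝ)) / (t:ℝ)^3 := by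
              gcongr
              linarith
          _ = 2 * k / (t:ℝ)^2 := by
              field_simp
end
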